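/- There exists a G_δ set G ⊆ ω^ω × ω^ω that is universal for the Laver ideal: each vertical section G_x is not strongly dominating, and every subset of ω^ω that is not strongly dominating is contained in some section G_x. -/

import Mathlib

open Filter Set

/-- `A ⊆ ω^ω` is strongly dominating if for every `Φ : ω^{<ω} → ω` there is
`f ∈ A` with `f n ≥ Φ (f↾n)` for all but finitely many `n`. Finite sequences
are encoded as lists, `f↾n = [f 0, …, f (n-1)]`. -/
def StronglyDominating (A : Set (ℕ → ℕ)) : Prop :=
  ∀ Φ : List ℕ → ℕ, ∃ f ∈ A, ∀ᶠ n in Filter.atTop, Φ ((List.range n).map f) ≤ f n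

lemma laver_aux_open (n : ℕ) :
    IsOpen {p : (ℕ → ℕ) × (ℕ → ℕ) |
      p.2 n < p.1 (Encodable.encode ((List.range n).map p.2))} := by
  rw [isOpen_iff_mem_nhds]
  intro p hp
  set k := Encodable.encode ((List.range n).map p.2) with hk
  have hco : ∀ (i : ℕ) (c : ℕ), IsOpen {q : (ℕ → ℕ) × (ℕ → ℕ) | q.2 i = c} := by
    intro i c
    have hc : Continuous fun q : (ℕ → ℕ) × (ℕ → ℕ) => q.2 i :=
      (continuous_apply i).comp continuous_snd
    exact hc.isOpen_preimage ({c} : Set ℕ) (isOpen_discrete _)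
  have hco1 : ∀ (i : ℕ) (c : ℕ), IsOpen {q : (ℕ → ℕ) × (ℕ → ℕ) | q.1 i = c} := by
    intro i c
    have hc : Continuous fun q : (ℕ → ℕ) × (ℕ → ℕ) => q.1 i :=
      (continuous_apply i).comp continuous_fst
    exact hc.isOpen_preimage ({c} : Set ℕ) (isOpen_discrete _)
  rw [mem_nhds_iff]
  refine ⟨{q : (ℕ → ℕ) × (ℕ → ℕ) | (∀ i ∈ Finset.range (n+1), q.2 i = p.2 i) ∧ q.1 k = p.1 k},
    ?_, ?_, ?_⟩
  · intro q hq
    have hmap : (List.range n).map q.2 = (List.range n).map p.2 := by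
      apply List.map_congr_left
      intro i hi
      exact hq.1 i (Finset.mem_range.mpr (Nat.lt_succ_of_lt (List.mem_range.mp hi)))
    have hqn : q.2 n = p.2 n := hq.1 n (Finset.mem_range.mpr (Nat.lt_succ_self n))
    simp only [mem_setOf_eq, hmap, ← hk, hq.2, hqn]
    exact hp
  · have : {q : (ℕ → ℕ) × (ℕ → ℕ) | (∀ i ∈ Finset.range (n+1), q.2 i = p.2 i) ∧ q.1 k = p.1 k}
        = (⋂ i ∈ Finset.range (n+1), {q : (ℕ → ℕ) × (ℕ → ℕ) | q.2 i = p.2 i}) ∩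
          {q : (ℕ → ℕ) × (ℕ → ℕ) | q.1 k = p.1 k} := by
      ext q; simp [mem_iInter]
    rw [this]
    exact (isOpen_biInter_finset fun i _ => hco i (p.2 i)).inter (hco1 k (p.1 k))
  · exact ⟨fun i _ => rfl, rfl⟩

/-- There is a G_δ set `G ⊆ ω^ω × ω^ω` universal for the Laver ideal (the
family of non–strongly dominating sets): every section of `G` is not strongly
dominating, and every non–strongly dominating set is contained in a section. -/
theorem exists_Gdelta_universal_Laver :
    ∃ G : Set ((ℕ → ℕ) × (ℕ → ℕ)), IsGδ G ∧
      (∀ x : ℕ → ℕ, ¬ StronglyDominating {y : ℕ → ℕ | (x, y) ∈ G}) ∧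
      ∀ A : Set (ℕ → ℕ), ¬ StronglyDominating A →
        ∃ x : ℕ → ℕ, A ⊆ {y : ℕ → ℕ | (x, y) ∈ G} := by
  set U : ℕ → Set ((ℕ → ℕ) × (ℕ → ℕ)) := fun n =>
    {p | p.2 n < p.1 (Encodable.encode ((List.range n).map p.2))} with hU
  refine ⟨⋂ N, ⋃ n, ⋃ (_ : N ≤ n), U n, ?_, ?_, ?_⟩
  · exact IsGδ.iInter fun N =>
      (isOpen_iUnion fun n => isOpen_iUnion fun _ => laver_aux_open n).isGδ
  · intro x hSD
    obtain ⟨f, hf, hev⟩ := hSD (fun s => x (Encodable.encode s))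
    simp only [mem_setOf_eq, mem_iInter, mem_iUnion] at hf
    have hfreq : ∃ᶠ n in atTop,
        f n < x (Encodable.encode ((List.range n).map f)) := by
      rw [frequently_atTop]
      intro N
      obtain ⟨n, hn, h⟩ := hf N
      exact ⟨n, hn, h⟩
    obtain ⟨n, h1, h2⟩ := (hev.and_frequently hfreq).exists
    exact absurd h1 (not_le.mpr h2)
  · intro A hA
    rw [StronglyDominating] at hA
    push_neg at hA
    obtain ⟨Φ, hΦ⟩ := hA
    refine ⟨fun n => Φ (Denumerable.ofNat (List ℕ) n), fun f hf => ?_⟩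
    simp only [mem_setOf_eq, mem_iInter, mem_iUnion]
    intro N
    have := hΦ f hf
    rw [frequently_atTop] at this
    obtain ⟨n, hn, h⟩ := this N
    refine ⟨n, hn, ?_⟩
    simp only [hU, mem_setOf_eq, Denumerable.ofNat_encode]
    exact h
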